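/- Assume the initial game H is finite. For every knowledge model for H, G_{K*RAT(br^g)} ⊆ T_{msd^l}^∞: common knowledge that each player plays a best response (within H_i, to some joint mixed strategy of the opponents he considers possible) implies that the players choose only strategies that survive the iterated elimination of strategies strictly dominated by a mixed strategy. -/

import Mathlib

/-!
Epistemic analysis of arbitrary strategic games. The initial game `H` has
players `ι`, strategy sets `S i` (the full types, all nonempty) and payoff
functions `p i`. A restriction of `H` is a family `G : ∀ i, Set (S i)`,
ordered componentwise; this is a complete lattice with largest element `⊤ = H`.
-/

open Set

universe u

/-- The `o`-th transfinite iterate of `T`, starting from `⊤ = H`. -/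
noncomputable def lfpIter {D : Type u} [CompleteLattice D] (T : D → D) (o : Ordinal.{u}) : D :=
  Ordinal.limitRecOn (motive := fun _ => D) o ⊤ (fun _ ih => T ih)
    (fun o _ ih => ⨅ o' : {o' : Ordinal.{u} // o' < o}, ih o'.1 o'.2)

/-- The outcome `T^∞` of (iterating) `T`. -/
noncomputable def outcome {D : Type u} [CompleteLattice D] (T : D → D) : D :=
  lfpIter T (sInf {α : Ordinal.{u} | lfpIter T (α + 1) = lfpIter T α})

/-- The operator `T_φ` of iterated elimination of strategies that are not `φ_i`-optimal:
`T_φ(G)_i = {s_i ∈ G_i | φ_i(s_i, G)}`. -/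
def Topr {ι : Type u} {S : ι → Type u} (φ : ∀ i, S i → (∀ j, Set (S j)) → Prop)
    (G : ∀ i, Set (S i)) : ∀ i, Set (S i) :=
  fun i => {s | s ∈ G i ∧ φ i s G}

/-- `□E`: the event that every player believes the event `E`. -/
def box {ι Ω : Type u} (P : ι → Ω → Set Ω) (E : Set Ω) : Set Ω :=
  {ω | ∀ i, P i ω ⊆ E}

/-- `B*E`: the common belief event, `⋂_{k ≥ 1} □^k E`. -/
def commonBelief {ι Ω : Type u} (P : ι → Ω → Set Ω) (E : Set Ω) : Set Ω :=
  ⋂ k : ℕ, (box P)^[k + 1] E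

/-- `G_E`: the restriction of the game to the event `E`, given by the images of `E`
under the strategy functions `s̄_i`. -/
def restrOf {ι Ω : Type u} {S : ι → Type u} (sb : ∀ i, Ω → S i) (E : Set Ω) :
    ∀ i, Set (S i) := fun i => sb i '' E

/-- `RAT(φ)`: the event that each player `i` is `φ_i`-rational, i.e. that
`φ_i(s̄_i(ω), G_{P_i(ω)})` holds for every player `i`. -/
def RAT {ι Ω : Type u} {S : ι → Type u} (φ : ∀ i, S i → (∀ j, Set (S j)) → Prop)
    (sb : ∀ i, Ω → S i) (P : ι → Ω → Set Ω) : Set Ω :=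
  {ω | ∀ i, φ i (sb i ω) (restrOf sb (P i ω))}

/-- `m` is a probability distribution over the subset `A` of player strategies:
nonnegative, sums to `1`, and supported in `A`. -/
def IsDistOn {α : Type u} [Fintype α] (A : Set α) (m : α → ℝ) : Prop :=
  (∀ s, 0 ≤ m s) ∧ (∑ s, m s = 1) ∧ ∀ s, m s ≠ 0 → s ∈ A

/-- The full strategy profile obtained from player `i`'s strategy `si` and a joint
strategy `t` of his opponents. -/
def extProf {ι : Type u} [DecidableEq ι] {S : ι → Type u} (i : ι) (si : S i)
    (t : ∀ j : {j : ι // j ≠ i}, S j.1) : ∀ j, S j :=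
  fun j => if h : j = i then cast (congrArg S h.symm) si else t ⟨j, h⟩

/-- Expected payoff `p_i(si, μ)` of player `i` playing `si` against the joint mixed
strategy `μ = (m_j)_{j ≠ i}` of his opponents (entry `i` of `μ` is ignored):
`Σ_{s_{-i}} (Π_{j ≠ i} m_j(s_j)) p_i(si, s_{-i})`. -/
def jointMixedPayoff {ι : Type u} [Fintype ι] [DecidableEq ι] {S : ι → Type u}
    [∀ i, Fintype (S i)] (p : ∀ i : ι, (∀ j, S j) → ℝ) (i : ι) (si : S i)
    (μ : ∀ j, S j → ℝ) : ℝ :=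
  ∑ t : ∀ j : {j : ι // j ≠ i}, S j.1,
    (∏ j : {j : ι // j ≠ i}, μ j.1 (t j)) * p i (extProf i si t)

/-- `br^g_i(s, G)` with mixed beliefs: `s` is a best response in `H_i` to some joint
mixed strategy `μ = (m_j)_{j ≠ i}` of the opponents with `m_j ∈ Δ G_j`. -/
def brgMixed {ι : Type u} [Fintype ι] [DecidableEq ι] {S : ι → Type u}
    [∀ i, Fintype (S i)] (p : ∀ i : ι, (∀ j, S j) → ℝ) (i : ι) (s : S i)
    (G : ∀ j, Set (S j)) : Prop :=
  ∃ μ : ∀ j, S j → ℝ, (∀ j, j ≠ i → IsDistOn (G j) (μ j)) ∧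
    ∀ s' : S i, jointMixedPayoff p i s' μ ≤ jointMixedPayoff p i s μ

/-- Expected payoff of the mixed strategy `m` of player `i` against the joint
strategy of the opponents given by the profile `t` (entry `i` of `t` is ignored). -/
def mixedPayoff {ι : Type u} [Fintype ι] [DecidableEq ι] {S : ι → Type u}
    [∀ i, Fintype (S i)] (p : ∀ i : ι, (∀ j, S j) → ℝ) (i : ι) (m : S i → ℝ)
    (t : ∀ j, S j) : ℝ :=
  ∑ s : S i, m s * p i (Function.update t i s)

/-- `msd^l_i(s, G)`: `s` is not strictly dominated on `G` by any mixed strategy in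
`Δ G_i` (a distribution over the current restriction). -/
def msdl {ι : Type u} [Fintype ι] [DecidableEq ι] {S : ι → Type u}
    [∀ i, Fintype (S i)] (p : ∀ i : ι, (∀ j, S j) → ℝ) (i : ι) (s : S i)
    (G : ∀ j, Set (S j)) : Prop :=
  ¬ ∃ m : S i → ℝ, IsDistOn (G i) m ∧
    ∀ t : ∀ j, S j, (∀ j, j ≠ i → t j ∈ G j) →
      p i (Function.update t i s) < mixedPayoff p i m t


section Aux

variable {ι : Type u} [Fintype ι] [DecidableEq ι] {S : ι → Type u} [∀ i, Fintype (S i)]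

lemma update_extProf (i : ι) (s s' : S i) (t : ∀ j : {j : ι // j ≠ i}, S j.1) :
    Function.update (extProf i s t) i s' = extProf i s' t := by
  funext j
  by_cases h : j = i
  · subst h
    simp [extProf]
  · rw [Function.update_of_ne h]
    simp [extProf, h]

lemma brgMixed_msdl (p : ∀ i : ι, (∀ j, S j) → ℝ) (i : ι) (s : S i)
    {G G' : ∀ j, Set (S j)} (hGG' : ∀ j, G j ⊆ G' j)
    (hbr : brgMixed p i s G) : msdl p i s G' := by
  obtain ⟨μ, hμ, hbest⟩ := hbr
  rintro ⟨m, ⟨hm0, hm1, hmsupp⟩, hdom⟩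
  set w : (∀ j : {j : ι // j ≠ i}, S j.1) → ℝ := fun t => ∏ j, μ j.1 (t j) with hw
  have hw0 : ∀ t, 0 ≤ w t := fun t => Finset.prod_nonneg fun j _ => (hμ j.1 j.2).1 (t j)
  have hwsum : (∑ t, w t) = 1 := by
    rw [hw, ← Fintype.piFinset_univ, ← Finset.prod_univ_sum]
    rw [Finset.prod_congr rfl (fun j _ => (hμ j.1 j.2).2.1), Finset.prod_const_one]
  set A : (∀ j : {j : ι // j ≠ i}, S j.1) → ℝ := fun t => p i (extProf i s t) with hA
  set B : (∀ j : {j : ι // j ≠ i}, S j.1) → ℝ :=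
    fun t => ∑ s' : S i, m s' * p i (extProf i s' t) with hB
  have hAB : ∀ t, w t ≠ 0 → A t < B t := by
    intro t ht
    have hmem : ∀ j : {j : ι // j ≠ i}, t j ∈ G j.1 := by
      intro j
      have := Finset.prod_ne_zero_iff.mp ht j (Finset.mem_univ j)
      exact (hμ j.1 j.2).2.2 (t j) this
    have hcond : ∀ j, j ≠ i → extProf i s t j ∈ G' j := by
      intro j hj
      have : extProf i s t j = t ⟨j, hj⟩ := by simp [extProf, hj]
      rw [this]
      exact hGG' j (hmem ⟨j, hj⟩)
    have := hdom (extProf i s t) hcond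
    rw [update_extProf] at this
    have hmix : mixedPayoff p i m (extProf i s t) = B t := by
      unfold mixedPayoff
      exact Finset.sum_congr rfl fun s' _ => by rw [update_extProf]
    rw [hmix] at this
    exact this
  have hVA : jointMixedPayoff p i s μ = ∑ t, w t * A t := rfl
  have hsA : ∀ s' : S i, jointMixedPayoff p i s' μ = ∑ t, w t * (p i (extProf i s' t)) := fun _ => rfl
  have hex : ∃ t, w t ≠ 0 := by
    by_contra hc
    push_neg at hc
    rw [Finset.sum_congr rfl (fun t _ => hc t)] at hwsum
    simp at hwsum
  obtain ⟨t0, ht0⟩ := hex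
  have hlt : (∑ t, w t * A t) < ∑ t, w t * B t := by
    apply Finset.sum_lt_sum
    · intro t _
      by_cases h : w t = 0
      · rw [h]; simp
      · exact mul_le_mul_of_nonneg_left (le_of_lt (hAB t h)) (hw0 t)
    · exact ⟨t0, Finset.mem_univ t0,
        mul_lt_mul_of_pos_left (hAB t0 ht0) (lt_of_le_of_ne (hw0 t0) (Ne.symm ht0))⟩
  have hswap : (∑ t, w t * B t) = ∑ s' : S i, m s' * jointMixedPayoff p i s' μ := by
    simp_rw [hsA, hB, Finset.mul_sum]
    rw [Finset.sum_comm]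
    exact Finset.sum_congr rfl fun s' _ => Finset.sum_congr rfl fun t _ => by ring
  have hle : (∑ s' : S i, m s' * jointMixedPayoff p i s' μ) ≤ jointMixedPayoff p i s μ := by
    calc (∑ s' : S i, m s' * jointMixedPayoff p i s' μ)
        ≤ ∑ s' : S i, m s' * jointMixedPayoff p i s μ :=
          Finset.sum_le_sum fun s' _ => mul_le_mul_of_nonneg_left (hbest s') (hm0 s')
      _ = jointMixedPayoff p i s μ := by rw [← Finset.sum_mul, hm1, one_mul]
  rw [hswap] at hlt
  exact absurd (lt_of_lt_of_le hlt hle) (lt_irrefl _)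

end Aux

lemma lfpIter_zero {D : Type u} [CompleteLattice D] (T : D → D) : lfpIter T 0 = ⊤ :=
  Ordinal.limitRecOn_zero _ _ _

lemma lfpIter_succ {D : Type u} [CompleteLattice D] (T : D → D) (o : Ordinal.{u}) :
    lfpIter T (Order.succ o) = T (lfpIter T o) :=
  Ordinal.limitRecOn_succ _ _ _ _

lemma lfpIter_limit {D : Type u} [CompleteLattice D] (T : D → D) {o : Ordinal.{u}}
    (h : Order.IsSuccLimit o) :
    lfpIter T o = ⨅ o' : {o' : Ordinal.{u} // o' < o}, lfpIter T o'.1 :=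
  Ordinal.limitRecOn_limit _ _ _ _ h


/-- assume the initial game `H` is finite. For every knowledge model
for `H`, `G_{K*RAT(br^g)} ⊆ T_{msd^l}^∞`: common knowledge that each player plays a
best response (within `H_i`, to some joint mixed strategy of the opponents he
considers possible) implies that the players choose only strategies surviving the
iterated elimination of strategies strictly dominated by a mixed strategy. -/
theorem restr_commonKnowledge_RAT_brgMixed_le_outcome_msdl {ι : Type u}
    [Fintype ι] [DecidableEq ι] {S : ι → Type u} [∀ i, Fintype (S i)]
    [∀ i, Nonempty (S i)] (p : ∀ i : ι, (∀ j, S j) → ℝ)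
    {Ω : Type u} [Nonempty Ω] (sb : ∀ i, Ω → S i) (P : ι → Ω → Set Ω)
    (hP1 : ∀ i ω, (P i ω).Nonempty)
    (hP2 : ∀ i ω ω', ω' ∈ P i ω → P i ω' = P i ω)
    (hP3 : ∀ i ω, ω ∈ P i ω) :
    restrOf sb (commonBelief P (RAT (brgMixed p) sb P)) ≤ outcome (Topr (msdl p)) := by
  classical
  set E := RAT (brgMixed p) sb P with hE
  set C := commonBelief P E with hC
  set Gs := restrOf sb C with hGs
  have hPC : ∀ ω ∈ C, ∀ i, P i ω ⊆ C := by
    intro ω hω i ω' hω'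
    rw [hC, commonBelief, mem_iInter]
    intro k
    have h1 : ω ∈ (box P)^[k + 2] E := by
      rw [hC, commonBelief, mem_iInter] at hω
      exact hω (k + 1)
    rw [Function.iterate_succ_apply'] at h1
    exact h1 i hω'
  have hPE : ∀ ω ∈ C, ∀ i, P i ω ⊆ E := by
    intro ω hω i
    rw [hC, commonBelief, mem_iInter] at hω
    have := hω 0
    rw [Function.iterate_one] at this
    exact this i
  have hbrall : ∀ i, ∀ s ∈ Gs i, brgMixed p i s Gs := by
    rintro i s ⟨ω, hω, rfl⟩
    have hωE : ω ∈ E := hPE ω hω i (hP3 i ω)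
    obtain ⟨μ, hμ, hbest⟩ := hωE i
    refine ⟨μ, fun j hj => ?_, hbest⟩
    obtain ⟨h1, h2, h3⟩ := hμ j hj
    exact ⟨h1, h2, fun x hx => Set.image_mono (f := sb j) (hPC ω hω i) (h3 x hx)⟩
  have main : ∀ o : Ordinal.{u}, Gs ≤ lfpIter (Topr (msdl p)) o := by
    intro o
    induction o using Ordinal.induction with
    | h o IH =>
      rcases Ordinal.zero_or_succ_or_isSuccLimit o with h0 | ⟨a, ha⟩ | hlim
      · subst h0; rw [lfpIter_zero]; exact le_top
      · subst ha
        rw [lfpIter_succ]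
        intro i s hs
        refine ⟨IH a (Order.lt_succ a) i hs, ?_⟩
        exact brgMixed_msdl p i s (fun j => IH a (Order.lt_succ a) j) (hbrall i s hs)
      · rw [lfpIter_limit _ hlim]
        exact le_iInf fun o' => IH o'.1 o'.2
  exact main _
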